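/- Let N ≥ 1, let w, a ∈ ℂ^N and ε ≥ 0. Then |w^H (a + δ)| ≥ 1 holds for every δ ∈ ℂ^N with ‖δ‖₂ ≤ ε if and only if |w^H a| ≥ ε‖w‖₂ + 1. -/

import Mathlib

/-- `|w^H (a + δ)| ≥ 1` for every `δ` with `‖δ‖₂ ≤ ε` iff
`|w^H a| ≥ ε‖w‖₂ + 1`. -/
theorem rab_worst_case_constraint_iff (N : ℕ) (hN : 1 ≤ N)
    (w a : EuclideanSpace ℂ (Fin N)) (ε : ℝ) (hε : 0 ≤ ε) :
    (∀ δ : EuclideanSpace ℂ (Fin N), ‖δ‖ ≤ ε →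
      1 ≤ ‖(inner ℂ w (a + δ) : ℂ)‖) ↔
    ε * ‖w‖ + 1 ≤ ‖(inner ℂ w a : ℂ)‖ := by
  constructor
  · intro h
    set T : ℂ := inner ℂ w a with hT
    have hT0 : T ≠ 0 := by
      intro h0
      have := h 0 (by simpa using hε)
      rw [add_zero, ← hT, h0] at this
      simp at this
      linarith
    have haT : (0 : ℝ) < ‖T‖ := by
      simpa using (norm_pos_iff.mpr hT0)
    have hw0 : w ≠ 0 := by
      intro h0
      apply hT0
      rw [hT, h0, inner_zero_left]
    have hwpos : (0 : ℝ) < ‖w‖ := norm_pos_iff.mpr hw0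
    set s : ℝ := min (ε * ‖w‖) (‖T‖) with hs
    have hs0 : 0 ≤ s := le_min (by positivity) haT.le
    have hsT : s ≤ ‖T‖ := min_le_right _ _
    have hsε : s ≤ ε * ‖w‖ := min_le_left _ _
    set c : ℂ := -(s : ℂ) * (T / ‖T‖) / ((‖w‖ : ℂ)^2) with hc
    set δ : EuclideanSpace ℂ (Fin N) := c • w with hδ
    have hcabs : ‖c‖ = s / ‖w‖^2 := by
      rw [hc]
      rw [norm_div, norm_mul, norm_neg, norm_div]
      simp [Complex.norm_real, abs_of_nonneg hs0, abs_of_nonneg hwpos.le]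
      field_simp
    have hδnorm : ‖δ‖ ≤ ε := by
      rw [hδ, norm_smul, hcabs]
      rw [div_mul_eq_mul_div, pow_two]
      rw [div_le_iff₀ (by positivity)]
      calc s * ‖w‖ ≤ ε * ‖w‖ * ‖w‖ := by nlinarith
        _ = ε * (‖w‖ * ‖w‖) := by ring
    have hinner : (inner ℂ w (a + δ) : ℂ) = T - (s : ℂ) * (T / ‖T‖) := by
      rw [inner_add_right, ← hT, hδ, inner_smul_right]
      have : (inner ℂ w w : ℂ) = ((‖w‖ : ℝ)^2 : ℝ) := by
        exact_mod_cast inner_self_eq_norm_sq_to_K (𝕜 := ℂ) w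
      rw [this, hc]
      have hw' : ((‖w‖ : ℝ) : ℂ) ≠ 0 := Complex.ofReal_ne_zero.mpr hwpos.ne'
      have hT' : ((‖T‖ : ℝ) : ℂ) ≠ 0 := Complex.ofReal_ne_zero.mpr haT.ne'
      push_cast
      field_simp
      ring
    have habs : ‖(inner ℂ w (a + δ) : ℂ)‖ = ‖T‖ - s := by
      rw [hinner]
      have : T - (s : ℂ) * (T / ‖T‖)
          = T * ((((‖T‖ : ℝ) : ℂ) - s) / ‖T‖) := by
        have hT' : ((‖T‖ : ℝ) : ℂ) ≠ 0 := Complex.ofReal_ne_zero.mpr haT.ne'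
        field_simp
      rw [this, norm_mul, norm_div]
      rw [show (((‖T‖ : ℝ) : ℂ) - (s : ℂ)) = ((‖T‖ - s : ℝ) : ℂ) by push_cast; ring]
      rw [Complex.norm_real, Complex.norm_real, Real.norm_eq_abs, Real.norm_eq_abs, abs_of_nonneg (by linarith), abs_of_nonneg haT.le]
      field_simp
    have h1 := h δ hδnorm
    rw [habs] at h1
    -- h1 : 1 ≤ ‖T‖ - s
    have hcase : s = ε * ‖w‖ := by
      rcases le_or_gt (‖T‖) (ε * ‖w‖) with hle | hlt
      · exfalso
        have : s = ‖T‖ := min_eq_right hle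
        rw [this] at h1; linarith
      · exact min_eq_left hlt.le
    rw [hcase] at h1
    linarith
  · intro h δ hδ
    have hCS : ‖(inner ℂ w δ : ℂ)‖ ≤ ε * ‖w‖ := by
      have h1 : ‖(inner ℂ w δ : ℂ)‖ ≤ ‖w‖ * ‖δ‖ := norm_inner_le_norm w δ
      nlinarith [norm_nonneg w]
    have htri : ‖(inner ℂ w a : ℂ)‖
        ≤ ‖(inner ℂ w (a + δ) : ℂ)‖ + ‖(inner ℂ w δ : ℂ)‖ := by
      have := norm_add_le (inner ℂ w (a + δ) : ℂ) (-(inner ℂ w δ : ℂ))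
      rw [norm_neg] at this
      have he : (inner ℂ w (a + δ) : ℂ) + -(inner ℂ w δ : ℂ) = inner ℂ w a := by
        rw [inner_add_right]; ring
      rw [he] at this
      linarith
    linarith
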